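/- Performance difference lemma: for any two stationary policies π and π', J(π') - J(π) = Σ_{s ∈ S} Σ_{a ∈ A} η_{π'}(s) (π'(s,a) - π(s,a)) Q_π(s,a), where η_{π'} is the discounted state occupancy measure of π' and Q_π is the state-action value function of π. -/

import Mathlib

open Finset Matrix

/-- Performance difference lemma:
J(π') - J(π) = Σ_s Σ_a η_{π'}(s) (π'(s,a) - π(s,a)) Q_π(s,a). -/
theorem performance_difference_lemma
    {S A : Type} [Fintype S] [Fintype A] [DecidableEq S] [Nonempty S] [Nonempty A]
    (r : S → A → ℝ) (P : S → A → S → ℝ)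
    (hP : ∀ s a, P s a ∈ stdSimplex ℝ S)
    (γ : ℝ) (hγ : γ ∈ Set.Ioo (0 : ℝ) 1)
    (ρ : S → ℝ) (hρ : ρ ∈ stdSimplex ℝ S)
    (π π' : S → A → ℝ) (hπ : ∀ s, π s ∈ stdSimplex ℝ A) (hπ' : ∀ s, π' s ∈ stdSimplex ℝ A)
    (V V' : S → ℝ)
    (hV : ∀ s, V s = (∑ a, π s a * r s a) + γ * ∑ s', (∑ a, π s a * P s a s') * V s')
    (hV' : ∀ s, V' s = (∑ a, π' s a * r s a) + γ * ∑ s', (∑ a, π' s a * P s a s') * V' s')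
    (Q : S → A → ℝ) (hQ : ∀ s a, Q s a = r s a + γ * ∑ s', P s a s' * V s')
    (η' : S → ℝ)
    (hη' : ∀ s, η' s = (1 - γ) *
      ∑' t : ℕ, γ ^ t * ((ρ ᵥ* (Matrix.of fun s₁ s₂ => ∑ a, π' s₁ a * P s₁ a s₂) ^ t) s)) :
    ((1 - γ) * ∑ s, ρ s * V' s) - ((1 - γ) * ∑ s, ρ s * V s)
      = ∑ s, ∑ a, η' s * (π' s a - π s a) * Q s a := by
  obtain ⟨hγ0, hγ1⟩ := hγ
  set M : Matrix S S ℝ := Matrix.of fun s₁ s₂ => ∑ a, π' s₁ a * P s₁ a s₂ with hMdef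
  set Δ : S → ℝ := fun s => V' s - V s with hΔdef
  set g : S → ℝ := fun s => ∑ a, (π' s a - π s a) * Q s a with hgdef
  set u : ℕ → S → ℝ := fun t => ρ ᵥ* M ^ t with hudef
  have hMentry : ∀ s s', M s s' = ∑ a, π' s a * P s a s' := fun s s' => rfl
  have hMnn : ∀ s s', 0 ≤ M s s' := by
    intro s s'
    exact Finset.sum_nonneg fun a _ => mul_nonneg ((hπ' s).1 a) ((hP s a).1 s')
  have hMrow : ∀ s, ∑ s', M s s' = 1 := by
    intro s
    simp_rw [hMentry]
    rw [Finset.sum_comm]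
    simp_rw [← Finset.mul_sum]
    calc ∑ a, π' s a * ∑ s', P s a s' = ∑ a, π' s a := by
          refine Finset.sum_congr rfl fun a _ => ?_
          rw [(hP s a).2, mul_one]
      _ = 1 := (hπ' s).2
  -- occupancy vectors are in the simplex
  have hu : ∀ t : ℕ, (∀ s, 0 ≤ u t s) ∧ ∑ s, u t s = 1 := by
    intro t
    induction t with
    | zero =>
      have h0 : u 0 = ρ := by
        simp [hudef, Matrix.vecMul_one]
      rw [h0]
      exact ⟨hρ.1, hρ.2⟩
    | succ n ih =>
      have hstep : ∀ s', u (n + 1) s' = ∑ s, u n s * M s s' := by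
        intro s'
        simp only [hudef, pow_succ, ← Matrix.vecMul_vecMul]
        rfl
      constructor
      · intro s'
        rw [hstep]
        exact Finset.sum_nonneg fun s _ => mul_nonneg (ih.1 s) (hMnn s s')
      · simp_rw [hstep]
        rw [Finset.sum_comm]
        simp_rw [← Finset.mul_sum]
        calc ∑ s, u n s * ∑ s', M s s' = ∑ s, u n s := by
              refine Finset.sum_congr rfl fun s _ => ?_
              rw [hMrow s, mul_one]
          _ = 1 := ih.2
  have hule : ∀ t s, u t s ≤ 1 := by
    intro t s
    calc u t s ≤ ∑ s', u t s' :=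
          Finset.single_le_sum (fun s' _ => (hu t).1 s') (Finset.mem_univ s)
      _ = 1 := (hu t).2
  -- Σ_a π Q = V
  have hQpi : ∀ s, ∑ a, π s a * Q s a = V s := by
    intro s
    simp_rw [hQ, mul_add]
    rw [Finset.sum_add_distrib, hV s]
    congr 1
    rw [Finset.mul_sum]
    simp_rw [Finset.sum_mul, Finset.mul_sum]
    rw [Finset.sum_comm]
    refine Finset.sum_congr rfl fun a _ => ?_
    refine Finset.sum_congr rfl fun s' _ => ?_
    ring
  -- Σ_a π' Q = (Σ_a π' r) + γ Σ M V
  have hQpi' : ∀ s, ∑ a, π' s a * Q s a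
      = (∑ a, π' s a * r s a) + γ * ∑ s', M s s' * V s' := by
    intro s
    simp_rw [hQ, mul_add]
    rw [Finset.sum_add_distrib]
    congr 1
    simp_rw [hMentry, Finset.sum_mul, Finset.mul_sum]
    rw [Finset.sum_comm]
    refine Finset.sum_congr rfl fun a _ => ?_
    refine Finset.sum_congr rfl fun s' _ => ?_
    ring
  -- Bellman difference equation
  have hBell : ∀ s, Δ s = g s + γ * ∑ s', M s s' * Δ s' := by
    intro s
    have h1 : g s = (∑ a, π' s a * Q s a) - (∑ a, π s a * Q s a) := by
      simp [hgdef, sub_mul, Finset.sum_sub_distrib]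
    have hV's : V' s = (∑ a, π' s a * r s a) + γ * ∑ s', M s s' * V' s' := hV' s
    have hsub : ∑ s', M s s' * Δ s' = (∑ s', M s s' * V' s') - ∑ s', M s s' * V s' := by
      simp [hΔdef, mul_sub, Finset.sum_sub_distrib]
    rw [h1, hQpi, hQpi', hsub]
    simp only [hΔdef]
    rw [hV's]
    ring
  -- recursion for dot products
  have hrec : ∀ t, u t ⬝ᵥ Δ = u t ⬝ᵥ g + γ * (u (t + 1) ⬝ᵥ Δ) := by
    intro t
    have hstep : ∀ s', u (t + 1) s' = ∑ s, u t s * M s s' := by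
      intro s'
      simp only [hudef, pow_succ, ← Matrix.vecMul_vecMul]
      rfl
    simp only [dotProduct]
    calc ∑ s, u t s * Δ s
        = ∑ s, (u t s * g s + γ * ∑ s', u t s * M s s' * Δ s') := by
          refine Finset.sum_congr rfl fun s _ => ?_
          rw [hBell s, mul_add, mul_left_comm]
          congr 1
          rw [Finset.mul_sum]
          simp_rw [mul_assoc]
      _ = (∑ s, u t s * g s) + γ * ∑ s', u (t + 1) s' * Δ s' := by
          rw [Finset.sum_add_distrib]
          congr 1
          rw [← Finset.mul_sum, Finset.sum_comm]
          congr 1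
          refine Finset.sum_congr rfl fun s' _ => ?_
          rw [hstep s', Finset.sum_mul]
  -- partial-sum identity
  have hpartial : ∀ n : ℕ,
      ρ ⬝ᵥ Δ = (∑ t ∈ Finset.range n, γ ^ t * (u t ⬝ᵥ g)) + γ ^ n * (u n ⬝ᵥ Δ) := by
    intro n
    induction n with
    | zero =>
      have h0 : u 0 = ρ := by simp [hudef, Matrix.vecMul_one]
      simp [h0]
    | succ n ih =>
      rw [ih, Finset.sum_range_succ, hrec n]
      ring
  -- bounds
  have hdotle : ∀ (t : ℕ) (x : S → ℝ), |u t ⬝ᵥ x| ≤ ∑ s, |x s| := by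
    intro t x
    calc |u t ⬝ᵥ x| ≤ ∑ s, |u t s * x s| := Finset.abs_sum_le_sum_abs _ _
      _ ≤ ∑ s, |x s| := by
          refine Finset.sum_le_sum fun s _ => ?_
          rw [abs_mul, abs_of_nonneg ((hu t).1 s)]
          calc u t s * |x s| ≤ 1 * |x s| :=
                mul_le_mul_of_nonneg_right (hule t s) (abs_nonneg _)
            _ = |x s| := one_mul _
  have hgeo : Summable (fun t : ℕ => γ ^ t) := summable_geometric_of_lt_one hγ0.le hγ1
  have hsummable : Summable (fun t : ℕ => γ ^ t * (u t ⬝ᵥ g)) := by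
    refine Summable.of_norm_bounded (hgeo.mul_left (∑ s, |g s|)) ?_
    intro t
    rw [Real.norm_eq_abs, abs_mul, abs_pow, abs_of_pos hγ0, mul_comm]
    exact mul_le_mul_of_nonneg_right (hdotle t g) (pow_nonneg hγ0.le t)
  have htail : Filter.Tendsto (fun n : ℕ => γ ^ n * (u n ⬝ᵥ Δ)) Filter.atTop (nhds 0) := by
    have hb : ∀ n : ℕ, ‖γ ^ n * (u n ⬝ᵥ Δ)‖ ≤ (∑ s, |Δ s|) * γ ^ n := by
      intro n
      rw [Real.norm_eq_abs, abs_mul, abs_pow, abs_of_pos hγ0, mul_comm]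
      exact mul_le_mul_of_nonneg_right (hdotle n Δ) (pow_nonneg hγ0.le n)
    have hg0 : Filter.Tendsto (fun n : ℕ => (∑ s, |Δ s|) * γ ^ n) Filter.atTop (nhds 0) := by
      have := (tendsto_pow_atTop_nhds_zero_of_lt_one hγ0.le hγ1).const_mul (∑ s, |Δ s|)
      simpa using this
    exact squeeze_zero_norm hb hg0
  have hHasSum : HasSum (fun t : ℕ => γ ^ t * (u t ⬝ᵥ g)) (ρ ⬝ᵥ Δ) := by
    rw [hsummable.hasSum_iff_tendsto_nat]
    have heq : (fun n : ℕ => ∑ t ∈ Finset.range n, γ ^ t * (u t ⬝ᵥ g))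
        = fun n : ℕ => ρ ⬝ᵥ Δ - γ ^ n * (u n ⬝ᵥ Δ) := by
      funext n
      rw [hpartial n]; ring
    rw [heq]
    simpa using Filter.Tendsto.sub (tendsto_const_nhds (x := ρ ⬝ᵥ Δ)) htail
  -- summability for swapping sums on the RHS
  have hsummand : ∀ s, Summable (fun t : ℕ => γ ^ t * u t s * g s) := by
    intro s
    refine Summable.of_norm_bounded (hgeo.mul_left (|g s|)) ?_
    intro t
    show ‖γ ^ t * u t s * g s‖ ≤ |g s| * γ ^ t
    rw [Real.norm_eq_abs, abs_mul, abs_mul, abs_pow, abs_of_pos hγ0,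
      abs_of_nonneg ((hu t).1 s)]
    calc γ ^ t * u t s * |g s| ≤ γ ^ t * 1 * |g s| := by
          refine mul_le_mul_of_nonneg_right ?_ (abs_nonneg _)
          exact mul_le_mul_of_nonneg_left (hule t s) (pow_nonneg hγ0.le t)
      _ = |g s| * γ ^ t := by ring
  -- now compute
  have hLHS : ((1 - γ) * ∑ s, ρ s * V' s) - ((1 - γ) * ∑ s, ρ s * V s)
      = (1 - γ) * (ρ ⬝ᵥ Δ) := by
    have h : ∑ s, ρ s * Δ s = (∑ s, ρ s * V' s) - ∑ s, ρ s * V s := by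
      simp [hΔdef, mul_sub, Finset.sum_sub_distrib]
    simp only [dotProduct]
    rw [h]; ring
  rw [hLHS, ← hHasSum.tsum_eq, ← tsum_mul_left]
  calc ∑' t : ℕ, (1 - γ) * (γ ^ t * (u t ⬝ᵥ g))
      = ∑' t : ℕ, ∑ s, (1 - γ) * (γ ^ t * u t s * g s) := by
        refine tsum_congr fun t => ?_
        simp only [dotProduct, Finset.mul_sum]
        refine Finset.sum_congr rfl fun s _ => ?_
        ring
    _ = ∑ s, ∑' t : ℕ, (1 - γ) * (γ ^ t * u t s * g s) := by
        exact Summable.tsum_finsetSum fun s _ => (hsummand s).mul_left _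
    _ = ∑ s, ∑ a, η' s * (π' s a - π s a) * Q s a := by
        refine Finset.sum_congr rfl fun s _ => ?_
        have hηs : η' s * g s = ∑' t : ℕ, (1 - γ) * (γ ^ t * u t s * g s) := by
          rw [hη' s]
          rw [mul_assoc, ← tsum_mul_right, ← tsum_mul_left]
        rw [← hηs, hgdef, Finset.mul_sum]
        refine Finset.sum_congr rfl fun a _ => ?_
        ring
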